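/- arXiv:2510.09765 — 2 statements merged into one kernel-verified Lean document; each statement's English description precedes it below -/
import Mathlib

section
/- For any n×n unitary Clifford group element G with G not proportional to the identity, |Tr(G)| ≤ n/√2, where n = 2^m. Consequently the minimum distance of the projective Clifford group under d(U,V) = sqrt(1 − |Tr(U*V)|/n) is at least sqrt(1 − 1/√2). -/
open Matrix Finset

noncomputable def PX : Matrix (Fin 2) (Fin 2) ℂ := !![0, 1; 1, 0]
noncomputable def PZ : Matrix (Fin 2) (Fin 2) ℂ := !![1, 0; 0, -1]

/-- `D(a,b) = ⊗_j X^{a_j} Z^{b_j}`, realized as a matrix indexed by `Fin m → Fin 2`. -/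
noncomputable def PauliD {m : ℕ} (a b : Fin m → ZMod 2) :
    Matrix (Fin m → Fin 2) (Fin m → Fin 2) ℂ :=
  fun x y => ∏ j, (PX ^ (a j).val * PZ ^ (b j).val) (x j) (y j)

/-- The Pauli group on `m` qubits: matrices `i^κ D(a,b)`. -/
def PauliGroup (m : ℕ) : Set (Matrix (Fin m → Fin 2) (Fin m → Fin 2) ℂ) :=
  {W | ∃ (κ : ℕ) (a b : Fin m → ZMod 2), W = (Complex.I ^ κ) • PauliD a b}

/-- one-qubit Pauli indexed by a pair -/
noncomputable def P1 (p : ZMod 2 × ZMod 2) : Matrix (Fin 2) (Fin 2) ℂ :=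
  PX ^ p.1.val * PZ ^ p.2.val

noncomputable def tens {m : ℕ} (M : Fin m → Matrix (Fin 2) (Fin 2) ℂ) :
    Matrix (Fin m → Fin 2) (Fin m → Fin 2) ℂ :=
  fun x y => ∏ j, M j (x j) (y j)

lemma tens_mul {m : ℕ} (M N : Fin m → Matrix (Fin 2) (Fin 2) ℂ) :
    tens M * tens N = tens (fun j => M j * N j) := by
  ext x y
  simp only [tens, Matrix.mul_apply]
  rw [Fintype.prod_sum (fun j t => M j (x j) t * N j t (y j))]
  exact Finset.sum_congr rfl fun z _ => (Finset.prod_mul_distrib).symm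

lemma tens_trace {m : ℕ} (M : Fin m → Matrix (Fin 2) (Fin 2) ℂ) :
    (tens M).trace = ∏ j, (M j).trace := by
  simp only [Matrix.trace, Matrix.diag, tens]
  rw [Fintype.prod_sum (fun j t => M j t t)]

lemma tens_conjT {m : ℕ} (M : Fin m → Matrix (Fin 2) (Fin 2) ℂ) :
    (tens M)ᴴ = tens (fun j => (M j)ᴴ) := by
  ext x y
  simp only [tens, Matrix.conjTranspose_apply]
  exact star_prod _ _

lemma tens_one {m : ℕ} : tens (fun _ : Fin m => (1 : Matrix (Fin 2) (Fin 2) ℂ)) = 1 := by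
  ext x y
  simp only [tens, Matrix.one_apply]
  by_cases h : x = y
  · subst h; simp
  · rw [if_neg h]
    obtain ⟨j, hj⟩ := Function.ne_iff.mp h
    exact Finset.prod_eq_zero (Finset.mem_univ j) (by simp [Matrix.one_apply, hj])

lemma tens_congr_smul {m : ℕ} (M N : Fin m → Matrix (Fin 2) (Fin 2) ℂ) (s : Fin m → ℂ)
    (h : ∀ j, M j = s j • N j) :
    tens M = (∏ j, s j) • tens N := by
  ext x y
  simp only [tens, Matrix.smul_apply, smul_eq_mul, ← Finset.prod_mul_distrib]
  exact Finset.prod_congr rfl fun j _ => by rw [h j]; rfl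

lemma zmod2_cases (s : ZMod 2) : s = 0 ∨ s = 1 := by fin_cases s
                                                     · exact .inl rfl
                                                     · exact .inr rfl

lemma hval0 : (0 : ZMod 2).val = 0 := rfl
lemma hval1 : (1 : ZMod 2).val = 1 := rfl
lemma hval2 : (2 : ZMod 2).val = 0 := rfl
lemma hadd11 : (1 : ZMod 2) + 1 = 0 := rfl

lemma P1_mul (p q : ZMod 2 × ZMod 2) :
    P1 p * P1 q = ((-1 : ℂ) ^ (p.2.val * q.1.val)) • P1 (p + q) := by
  obtain ⟨a, b⟩ := p; obtain ⟨c, d⟩ := q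
  rcases zmod2_cases a with rfl | rfl <;> rcases zmod2_cases b with rfl | rfl <;>
    rcases zmod2_cases c with rfl | rfl <;> rcases zmod2_cases d with rfl | rfl <;>
    · ext i j
      fin_cases i <;> fin_cases j <;>
        · simp only [P1, PX, PZ, Matrix.mul_apply, Matrix.smul_apply, Fin.sum_univ_two,
            Prod.mk_add_mk, hval0, hval1, hval2, pow_zero, pow_one, zero_add, add_zero, hadd11]
          norm_num [Matrix.one_apply]

lemma zmod2_sum {M : Type*} [AddCommMonoid M] (f : ZMod 2 → M) : ∑ s, f s = f 0 + f 1 :=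
  Fin.sum_univ_two f

lemma P1_conjT (p : ZMod 2 × ZMod 2) :
    (P1 p)ᴴ = ((-1 : ℂ) ^ (p.1.val * p.2.val)) • P1 p := by
  obtain ⟨a, b⟩ := p
  rcases zmod2_cases a with rfl | rfl <;> rcases zmod2_cases b with rfl | rfl <;>
    · ext i j
      fin_cases i <;> fin_cases j <;>
        · simp only [P1, PX, PZ, Matrix.mul_apply, Matrix.smul_apply, Matrix.conjTranspose_apply,
            Fin.sum_univ_two, hval0, hval1, pow_zero, pow_one]
          norm_num [Matrix.one_apply]

lemma P1_mul_conjT (p : ZMod 2 × ZMod 2) : P1 p * (P1 p)ᴴ = 1 := by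
  obtain ⟨a, b⟩ := p
  rcases zmod2_cases a with rfl | rfl <;> rcases zmod2_cases b with rfl | rfl <;>
    · ext i j
      fin_cases i <;> fin_cases j <;>
        · simp only [P1, PX, PZ, Matrix.mul_apply, Matrix.conjTranspose_apply,
            Fin.sum_univ_two, hval0, hval1, pow_zero, pow_one]
          norm_num [Matrix.one_apply]

lemma P1_trace (p : ZMod 2 × ZMod 2) :
    (P1 p).trace = if p = 0 then 2 else 0 := by
  obtain ⟨a, b⟩ := p
  rcases zmod2_cases a with rfl | rfl <;> rcases zmod2_cases b with rfl | rfl <;>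
    · simp only [P1, PX, PZ, Matrix.trace, Matrix.diag, Matrix.mul_apply,
        Fin.sum_univ_two, hval0, hval1, pow_zero, pow_one]
      norm_num [Matrix.one_apply, Prod.ext_iff]

lemma P1_complete (x x' y y' : Fin 2) :
    ∑ p : ZMod 2 × ZMod 2, P1 p x x' * star (P1 p y y') =
      if x = y ∧ x' = y' then 2 else 0 := by
  rw [Fintype.sum_prod_type, zmod2_sum]
  conv_lhs => rw [zmod2_sum, zmod2_sum]
  fin_cases x <;> fin_cases x' <;> fin_cases y <;> fin_cases y' <;>
    · simp only [P1, PX, PZ, Matrix.mul_apply, Fin.sum_univ_two, hval0, hval1,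
        pow_zero, pow_one]
      norm_num [Matrix.one_apply]

/-- n-qubit Pauli indexed by `c : Fin m → ZMod 2 × ZMod 2`. -/
noncomputable def Dc {m : ℕ} (c : Fin m → ZMod 2 × ZMod 2) :
    Matrix (Fin m → Fin 2) (Fin m → Fin 2) ℂ :=
  tens (fun j => P1 (c j))

noncomputable def sgn {m : ℕ} (c d : Fin m → ZMod 2 × ZMod 2) : ℂ :=
  ∏ j, (-1 : ℂ) ^ ((c j).2.val * (d j).1.val)

lemma sgn_ne_zero {m : ℕ} (c d : Fin m → ZMod 2 × ZMod 2) : sgn c d ≠ 0 :=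
  Finset.prod_ne_zero_iff.mpr fun j _ => pow_ne_zero _ (by norm_num)

lemma Dc_mul {m : ℕ} (c d : Fin m → ZMod 2 × ZMod 2) :
    Dc c * Dc d = sgn c d • Dc (c + d) := by
  rw [Dc, Dc, tens_mul]
  exact tens_congr_smul _ _ _ fun j => P1_mul (c j) (d j)

lemma Dc_mul_conjT {m : ℕ} (c : Fin m → ZMod 2 × ZMod 2) : Dc c * (Dc c)ᴴ = 1 := by
  rw [Dc, tens_conjT, tens_mul, ← tens_one]
  exact congrArg tens (funext fun j => P1_mul_conjT (c j))

lemma Dc_trace {m : ℕ} (c : Fin m → ZMod 2 × ZMod 2) :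
    (Dc c).trace = if c = 0 then ((2 : ℂ) ^ m) else 0 := by
  rw [Dc, tens_trace]
  by_cases hc : c = 0
  · subst hc
    simp only [Pi.zero_apply, P1_trace, if_pos rfl]
    simp
  · obtain ⟨j, hj⟩ := Function.ne_iff.mp hc
    rw [if_neg hc]
    exact Finset.prod_eq_zero (Finset.mem_univ j) (by rw [P1_trace, if_neg (by simpa using hj)])

lemma Dc_pair_trace {m : ℕ} (c d : Fin m → ZMod 2 × ZMod 2) :
    (Dc c * (Dc d)ᴴ).trace = if c = d then ((2 : ℂ) ^ m) else 0 := by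
  by_cases h : c = d
  · subst h; rw [Dc_mul_conjT, if_pos rfl, Matrix.trace_one]
    simp [Fintype.card_fun]
  · rw [if_neg h]
    simp only [Dc]
    rw [tens_conjT]
    have : (fun j => (P1 (d j))ᴴ) = fun j => ((-1:ℂ) ^ ((d j).1.val * (d j).2.val)) • P1 (d j) :=
      funext fun j => P1_conjT (d j)
    rw [this, tens_congr_smul _ _ _ (fun j => rfl), Matrix.mul_smul, Matrix.trace_smul]
    have h2 : (tens fun j => P1 (c j)) * (tens fun j => P1 (d j)) = Dc c * Dc d := rfl
    rw [h2, Dc_mul, Matrix.trace_smul, Dc_trace, if_neg, smul_zero, smul_zero]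
    intro hcd
    apply h
    funext j
    have h3 : ∀ p q : ZMod 2 × ZMod 2, p + q = 0 → p = q := by decide
    exact h3 _ _ (congrFun hcd j)

lemma Dc_smul_inj {m : ℕ} {α β : ℂ} {c d : Fin m → ZMod 2 × ZMod 2} (hα : α ≠ 0)
    (h : α • Dc c = β • Dc d) : c = d ∧ α = β := by
  have h1 := congrArg (fun M => (M * (Dc c)ᴴ).trace) h
  simp only [Matrix.smul_mul, Matrix.trace_smul, Dc_pair_trace, if_pos rfl,
    smul_eq_mul] at h1
  by_cases hdc : d = c
  · subst hdc
    rw [if_pos rfl] at h1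
    have h2m : ((2 : ℂ) ^ m) ≠ 0 := pow_ne_zero _ two_ne_zero
    exact ⟨rfl, mul_right_cancel₀ h2m h1⟩
  · rw [if_neg hdc, mul_zero] at h1
    exact absurd h1 (mul_ne_zero hα (pow_ne_zero _ two_ne_zero))

lemma Dc_complete {m : ℕ} (x x' y y' : Fin m → Fin 2) :
    ∑ c : Fin m → ZMod 2 × ZMod 2, Dc c x x' * star (Dc c y y') =
      if x = y ∧ x' = y' then ((2 : ℂ) ^ m) else 0 := by
  have hterm : ∀ c : Fin m → ZMod 2 × ZMod 2, Dc c x x' * star (Dc c y y') =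
      ∏ j, (P1 (c j) (x j) (x' j) * star (P1 (c j) (y j) (y' j))) := by
    intro c
    rw [Dc, tens, tens, star_prod, ← Finset.prod_mul_distrib]
  simp only [hterm]
  rw [← Fintype.prod_sum (fun j p => P1 p (x j) (x' j) * star (P1 p (y j) (y' j)))]
  simp only [P1_complete]
  by_cases h : x = y ∧ x' = y'
  · rw [if_pos h]
    obtain ⟨h1, h2⟩ := h
    subst h1; subst h2
    simp
  · rw [if_neg h]
    have : ∃ j, ¬(x j = y j ∧ x' j = y' j) := by
      by_contra hall
      push_neg at hall
      exact h ⟨funext fun j => (hall j).1, funext fun j => (hall j).2⟩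
    obtain ⟨j, hj⟩ := this
    exact Finset.prod_eq_zero (Finset.mem_univ j) (by rw [if_neg hj])

lemma Dc_schur {m : ℕ} (M : Matrix (Fin m → Fin 2) (Fin m → Fin 2) ℂ) :
    ∑ c : Fin m → ZMod 2 × ZMod 2, Dc c * M * (Dc c)ᴴ = ((2 : ℂ) ^ m * M.trace) • 1 := by
  ext x y
  rw [Matrix.sum_apply]
  have hterm : ∀ c : Fin m → ZMod 2 × ZMod 2, (Dc c * M * (Dc c)ᴴ) x y =
      ∑ x', ∑ y', M x' y' * (Dc c x x' * star (Dc c y y')) := by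
    intro c
    simp only [Matrix.mul_apply, Matrix.conjTranspose_apply, Finset.sum_mul]
    rw [Finset.sum_comm]
    exact Finset.sum_congr rfl fun x' _ => Finset.sum_congr rfl fun y' _ => by ring
  simp only [hterm]
  rw [Finset.sum_comm]
  have hswap : ∀ x', ∑ c : Fin m → ZMod 2 × ZMod 2, ∑ y',
      M x' y' * (Dc c x x' * star (Dc c y y')) =
      ∑ y', M x' y' * (if x = y ∧ x' = y' then ((2 : ℂ) ^ m) else 0) := by
    intro x'
    rw [Finset.sum_comm]
    exact Finset.sum_congr rfl fun y' _ => by rw [← Finset.mul_sum, Dc_complete]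
  simp only [hswap]
  by_cases hxy : x = y
  · subst hxy
    simp only [true_and, Matrix.smul_apply, Matrix.one_apply_eq, smul_eq_mul, mul_one]
    rw [Matrix.trace]
    rw [Finset.mul_sum]
    refine Finset.sum_congr rfl fun x' _ => ?_
    rw [Finset.sum_eq_single x']
    · rw [if_pos rfl]; rw [Matrix.diag]; ring
    · intro y' _ hy'; rw [if_neg (Ne.symm hy'), mul_zero]
    · intro hx'; exact absurd (Finset.mem_univ x') hx'
  · simp only [hxy, false_and, if_false, mul_zero, Finset.sum_const_zero,
      Matrix.smul_apply, Matrix.one_apply_ne hxy, smul_eq_mul, mul_zero]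

theorem stmt_8 (m : ℕ) (hm : 1 ≤ m) (G : Matrix (Fin m → Fin 2) (Fin m → Fin 2) ℂ)
    (hG : G ∈ Matrix.unitaryGroup (Fin m → Fin 2) ℂ)
    (hCliff : ∀ P ∈ PauliGroup m, Gᴴ * P * G ∈ PauliGroup m)
    (hnotscalar : ¬ ∃ c : ℂ, G = c • (1 : Matrix (Fin m → Fin 2) (Fin m → Fin 2) ℂ)) :
    ‖G.trace‖ ≤ (2 ^ m : ℕ) / Real.sqrt 2 ∧
    Real.sqrt (1 - 1 / Real.sqrt 2) ≤
      Real.sqrt (1 - ‖G.trace‖ / (2 ^ m : ℕ)) := by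
  classical
  have hGl : Gᴴ * G = 1 := by
    have := Unitary.star_mul_self_of_mem hG
    rwa [Matrix.star_eq_conjTranspose] at this
  have hGr : G * Gᴴ = 1 := by
    have := Unitary.mul_star_self_of_mem hG
    rwa [Matrix.star_eq_conjTranspose] at this
  -- Clifford action on the Pauli basis
  have hpg : ∀ c : Fin m → ZMod 2 × ZMod 2, ∃ (e : ℂ) (d : Fin m → ZMod 2 × ZMod 2),
      ‖e‖ = 1 ∧ Gᴴ * Dc c * G = e • Dc d := by
    intro c
    obtain ⟨κ, a, b, h⟩ := hCliff (Dc c)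
      ⟨0, fun j => (c j).1, fun j => (c j).2, by rw [pow_zero, one_smul]; rfl⟩
    exact ⟨Complex.I ^ κ, fun j => (a j, b j), by simp, by rw [h]; rfl⟩
  choose ε F habsε hGD using hpg
  have hεne : ∀ c, ε c ≠ 0 := by
    intro c h0
    have := habsε c
    rw [h0, norm_zero] at this
    exact one_ne_zero this.symm
  -- additivity of F and multiplicativity relation for ε
  have hFadd : ∀ c d, F (c + d) = F c + F d ∧
      sgn c d * ε (c + d) = ε c * ε d * sgn (F c) (F d) := by
    intro c d
    have key : (sgn c d * ε (c + d)) • Dc (F (c + d)) =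
        (ε c * ε d * sgn (F c) (F d)) • Dc (F c + F d) := by
      have e1 : Gᴴ * (Dc c * Dc d) * G = (sgn c d * ε (c + d)) • Dc (F (c + d)) := by
        rw [Dc_mul, Matrix.mul_smul, Matrix.smul_mul, hGD, smul_smul]
      have e2 : Gᴴ * (Dc c * Dc d) * G = (ε c * ε d * sgn (F c) (F d)) • Dc (F c + F d) := by
        have : Gᴴ * (Dc c * Dc d) * G = (Gᴴ * Dc c * G) * (Gᴴ * Dc d * G) := by
          have step : (Gᴴ * Dc c * G) * (Gᴴ * Dc d * G)
              = Gᴴ * Dc c * (G * Gᴴ) * (Dc d * G) := by noncomm_ring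
          rw [step, hGr, mul_one]
          noncomm_ring
        rw [this, hGD, hGD, Matrix.smul_mul, Matrix.mul_smul, smul_smul, Dc_mul, smul_smul]
      rw [← e1]
      exact e2
    exact Dc_smul_inj (mul_ne_zero (sgn_ne_zero c d) (hεne _)) key
  set Fix : Finset (Fin m → ZMod 2 × ZMod 2) := Finset.univ.filter (fun c => F c = c)
    with hFix
  have hcardU : Fintype.card (Fin m → ZMod 2 × ZMod 2) = 4 ^ m := by
    rw [Fintype.card_fun]
    norm_num
  have htr : ∀ c, (Gᴴ * (Dc c * G * (Dc c)ᴴ)).trace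
      = ε c * (if F c = c then (2:ℂ)^m else 0) := by
    intro c
    have hassoc : Gᴴ * (Dc c * G * (Dc c)ᴴ) = (Gᴴ * Dc c * G) * (Dc c)ᴴ := by noncomm_ring
    rw [hassoc, hGD, Matrix.smul_mul, Matrix.trace_smul, Dc_pair_trace, smul_eq_mul]
  have hmain : G.trace * star G.trace = ∑ c ∈ Fix, ε c := by
    have h1 : ∑ c, (Gᴴ * (Dc c * G * (Dc c)ᴴ)).trace
        = (2:ℂ)^m * (G.trace * star G.trace) := by
      rw [← Matrix.trace_sum, ← Matrix.mul_sum, Dc_schur, Matrix.mul_smul, mul_one,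
        Matrix.trace_smul, smul_eq_mul, Matrix.trace_conjTranspose]
      ring
    have h2 : ∑ c, (Gᴴ * (Dc c * G * (Dc c)ᴴ)).trace = (2:ℂ)^m * ∑ c ∈ Fix, ε c := by
      simp only [htr]
      have hsw : ∀ c, ε c * (if F c = c then (2:ℂ)^m else 0)
          = if F c = c then (2:ℂ)^m * ε c else 0 := by
        intro c; split <;> ring
      simp only [hsw]
      rw [← Finset.sum_filter, ← hFix, ← Finset.mul_sum]
    have hn : ((2:ℂ)^m) ≠ 0 := pow_ne_zero _ two_ne_zero
    exact (mul_left_cancel₀ hn (h2.symm.trans h1)).symm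
  have habs2 : (‖G.trace‖)^2 = ‖∑ c ∈ Fix, ε c‖ := by
    have h := congrArg norm hmain
    rwa [norm_mul, Complex.star_def, Complex.norm_conj, ← sq] at h
  have key : (‖G.trace‖)^2 ≤ (4:ℝ)^m / 2 := by
    by_cases hF : ∀ c, F c = c
    · by_cases hε1 : ∀ c, ε c = 1
      · exfalso
        apply hnotscalar
        have hcomm : ∀ c : Fin m → ZMod 2 × ZMod 2, Dc c * G * (Dc c)ᴴ = G := by
          intro c
          have h := hGD c
          rw [hε1 c, one_smul, hF c] at h
          have h2 : Dc c * G = G * Dc c := by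
            calc Dc c * G = (G * Gᴴ) * (Dc c * G) := by rw [hGr, one_mul]
              _ = G * (Gᴴ * Dc c * G) := by noncomm_ring
              _ = G * Dc c := by rw [h]
          calc Dc c * G * (Dc c)ᴴ = G * (Dc c * (Dc c)ᴴ) := by rw [h2]; noncomm_ring
            _ = G := by rw [Dc_mul_conjT, mul_one]
        have hs := Dc_schur G
        simp only [hcomm] at hs
        rw [Finset.sum_const, Finset.card_univ, hcardU] at hs
        have hc4 : ((4:ℂ)^m) ≠ 0 := pow_ne_zero _ (by norm_num)
        have hs' : ((4:ℂ)^m) • G = ((2:ℂ)^m * G.trace) • 1 := by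
          rw [← hs, ← Nat.cast_smul_eq_nsmul ℂ]
          norm_num
        refine ⟨((2:ℂ)^m * G.trace) / (4:ℂ)^m, ?_⟩
        calc G = ((4:ℂ)^m)⁻¹ • (((4:ℂ)^m) • G) := by
              rw [smul_smul, inv_mul_cancel₀ hc4, one_smul]
          _ = ((4:ℂ)^m)⁻¹ • (((2:ℂ)^m * G.trace) • 1) := by rw [hs']
          _ = (((2:ℂ)^m * G.trace) / (4:ℂ)^m) • 1 := by
              rw [smul_smul, div_eq_inv_mul]
      · push_neg at hε1
        obtain ⟨c₀, hc₀⟩ := hε1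
        have hmul' : ∀ c, ε (c + c₀) = ε c * ε c₀ := by
          intro c
          have h := (hFadd c c₀).2
          rw [hF c, hF c₀] at h
          exact mul_left_cancel₀ (sgn_ne_zero c c₀) (h.trans (by ring))
        have hFixu : Fix = Finset.univ := by
          rw [hFix]
          exact Finset.filter_true_of_mem (fun c _ => hF c)
        have hS0 : ∑ c ∈ Fix, ε c = 0 := by
          rw [hFixu]
          have h2 : (∑ c, ε c) * ε c₀ = ∑ c, ε c := by
            calc (∑ c, ε c) * ε c₀ = ∑ c, ε c * ε c₀ := Finset.sum_mul _ _ _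
              _ = ∑ c, ε (c + c₀) := by simp only [hmul']
              _ = ∑ c, ε c := Fintype.sum_equiv (Equiv.addRight c₀) _ _ (fun c => rfl)
          have h3 : (∑ c, ε c) * (ε c₀ - 1) = 0 := by
            rw [mul_sub, h2, mul_one, sub_self]
          rcases mul_eq_zero.mp h3 with h | h
          · exact h
          · exact absurd (sub_eq_zero.mp h) hc₀
        rw [habs2, hS0, norm_zero]
        positivity
    · push_neg at hF
      obtain ⟨c₀, hc₀⟩ := hF
      have hinj : ∀ c ∈ Fix, c + c₀ ∈ Finset.univ \ Fix := by
        intro c hc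
        rw [hFix, Finset.mem_filter] at hc
        rw [Finset.mem_sdiff]
        refine ⟨Finset.mem_univ _, ?_⟩
        rw [hFix, Finset.mem_filter]
        rintro ⟨-, hfix⟩
        rw [(hFadd c c₀).1, hc.2] at hfix
        exact hc₀ (add_left_cancel hfix)
      have hcard : Fix.card ≤ (Finset.univ \ Fix).card :=
        Finset.card_le_card_of_injOn (· + c₀) hinj
          (fun a _ b _ h => by exact add_right_cancel h)
      have hcard2 : (Fix.card : ℝ) ≤ (4:ℝ)^m / 2 := by
        rw [Finset.card_sdiff_of_subset (Finset.subset_univ _), Finset.card_univ, hcardU] at hcard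
        have hle : Fix.card ≤ 4^m := by
          calc Fix.card ≤ Finset.univ.card := Finset.card_le_card (Finset.subset_univ _)
            _ = 4^m := by rw [Finset.card_univ, hcardU]
        have : (Fix.card : ℝ) ≤ ((4^m - Fix.card : ℕ) : ℝ) := by exact_mod_cast hcard
        rw [Nat.cast_sub hle] at this
        push_cast at this ⊢
        linarith
      rw [habs2]
      have hbound : ‖∑ c ∈ Fix, ε c‖ ≤ (Fix.card : ℝ) := by
        calc ‖∑ c ∈ Fix, ε c‖ ≤ ∑ c ∈ Fix, ‖ε c‖ :=
              norm_sum_le _ _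
          _ = (Fix.card : ℝ) := by simp [habsε]
      linarith
  -- final numerics
  have ht0 : 0 ≤ ‖G.trace‖ := norm_nonneg _
  have hs2 : (0:ℝ) < Real.sqrt 2 := Real.sqrt_pos.mpr (by norm_num)
  have hsq : ((2:ℝ)^m / Real.sqrt 2)^2 = (4:ℝ)^m / 2 := by
    rw [div_pow, Real.sq_sqrt (by norm_num : (0:ℝ) ≤ 2)]
    congr 1
    rw [show (4:ℝ) = 2^2 by norm_num, ← pow_mul, mul_comm, pow_mul]
  have h1 : ‖G.trace‖ ≤ (2:ℝ)^m / Real.sqrt 2 := by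
    have h := Real.sqrt_le_sqrt key
    rwa [Real.sqrt_sq ht0, ← hsq, Real.sqrt_sq (by positivity)] at h
  constructor
  · push_cast
    exact h1
  · apply Real.sqrt_le_sqrt
    have h2m : (0:ℝ) < (2:ℝ)^m := by positivity
    have hdiv : ‖G.trace‖ / (2:ℝ)^m ≤ 1 / Real.sqrt 2 := by
      rw [div_le_div_iff₀ h2m hs2]
      calc ‖G.trace‖ * Real.sqrt 2
            ≤ ((2:ℝ)^m / Real.sqrt 2) * Real.sqrt 2 :=
              mul_le_mul_of_nonneg_right h1 hs2.le
        _ = (2:ℝ)^m := div_mul_cancel₀ _ hs2.ne'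
        _ = 1 * (2:ℝ)^m := (one_mul _).symm
    push_cast
    linarith
end

section
/- Let n be even and δ ∈ [0,1]. Suppose θ_1,…,θ_n take only two values θ (with multiplicity n/2 − k) and φ (with multiplicity n/2 + k) for some integer k with |k| < n/2, and satisfy |∑_j e^{iθ_j}| = n(1−δ²) with δ > 0. If additionally the configuration maximizes |∑_j e^{iθ_j/2}| subject to this constraint over such two-value configurations, then necessarily cos(θ−φ) = ((n(1−δ²))² − n²/2 − 2k²)/(2(n²/4 − k²)), and this quantity lies in [−1,1] for all δ ∈ [0,1] if and only if k = 0. -/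
open Complex

/-- The candidate value of `cos (θ - φ)` forced by the two-group constraint. -/
noncomputable def cosFormula (n : ℕ) (k : ℤ) (δ : ℝ) : ℝ :=
  (((n : ℝ) * (1 - δ ^ 2)) ^ 2 - (n : ℝ) ^ 2 / 2 - 2 * (k : ℝ) ^ 2) /
    (2 * ((n : ℝ) ^ 2 / 4 - (k : ℝ) ^ 2))

set_option maxHeartbeats 1000000 in
theorem stmt_14 (n : ℕ) (hn : 0 < n) (hev : Even n) (k : ℤ) (hk : 2 * |k| < n) :
    (∀ (θ φ δ : ℝ), 0 < δ → δ ≤ 1 →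
      ‖((n : ℂ) / 2 - (k : ℂ)) * Complex.exp (Complex.I * (θ : ℂ)) +
          ((n : ℂ) / 2 + (k : ℂ)) * Complex.exp (Complex.I * (φ : ℂ))‖ = n * (1 - δ ^ 2) →
      Real.cos (θ - φ) = cosFormula n k δ) ∧
    ((∀ δ : ℝ, 0 ≤ δ → δ ≤ 1 → -1 ≤ cosFormula n k δ ∧ cosFormula n k δ ≤ 1) ↔ k = 0) := by
  have hkR : 2 * |(k : ℝ)| < (n : ℝ) := by
    have := hk
    push_cast [Int.cast_abs] at this ⊢
    exact_mod_cast this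
  have hk2 : (k : ℝ) ^ 2 < (n : ℝ) ^ 2 / 4 := by
    have h1 : |(k : ℝ)| ^ 2 = (k : ℝ) ^ 2 := sq_abs _
    nlinarith [abs_nonneg (k : ℝ)]
  have hden : (0 : ℝ) < 2 * ((n : ℝ) ^ 2 / 4 - (k : ℝ) ^ 2) := by linarith
  constructor
  · intro θ φ δ hδ hδ1 h
    set a : ℝ := (n : ℝ) / 2 - (k : ℝ) with ha
    set b : ℝ := (n : ℝ) / 2 + (k : ℝ) with hb
    have hz : ((n : ℂ) / 2 - (k : ℂ)) * Complex.exp (Complex.I * (θ : ℂ)) +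
          ((n : ℂ) / 2 + (k : ℂ)) * Complex.exp (Complex.I * (φ : ℂ))
        = ((a * Real.cos θ + b * Real.cos φ : ℝ) : ℂ)
          + ((a * Real.sin θ + b * Real.sin φ : ℝ) : ℂ) * Complex.I := by
      rw [mul_comm Complex.I (θ : ℂ), mul_comm Complex.I (φ : ℂ),
        Complex.exp_mul_I, Complex.exp_mul_I]
      push_cast [ha, hb, Complex.ofReal_cos, Complex.ofReal_sin]
      ring
    rw [hz] at h
    have h2 : (a * Real.cos θ + b * Real.cos φ) ^ 2 + (a * Real.sin θ + b * Real.sin φ) ^ 2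
        = ((n : ℝ) * (1 - δ ^ 2)) ^ 2 := by
      have h3 := congrArg (· ^ 2) h
      simp only [Complex.sq_norm, Complex.normSq_add_mul_I] at h3
      exact h3
    have key : a ^ 2 + b ^ 2 + 2 * a * b * Real.cos (θ - φ)
        = ((n : ℝ) * (1 - δ ^ 2)) ^ 2 := by
      rw [Real.cos_sub]
      nlinarith [Real.sin_sq_add_cos_sq θ, Real.sin_sq_add_cos_sq φ, h2]
    simp only [ha, hb] at key
    rw [cosFormula, eq_div_iff (ne_of_gt hden)]
    linear_combination key
  · constructor
    · intro hAll
      have h1 := (hAll 1 zero_le_one le_rfl).1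
      rw [cosFormula] at h1
      rw [le_div_iff₀ hden] at h1
      have : (k : ℝ) ^ 2 ≤ 0 := by nlinarith
      have : (k : ℝ) = 0 := by nlinarith [sq_nonneg (k : ℝ)]
      exact_mod_cast this
    · intro hk0 δ hδ0 hδ1
      subst hk0
      have hnR : (0 : ℝ) < n := by exact_mod_cast hn
      have hu0 : (0 : ℝ) ≤ 1 - δ ^ 2 := by nlinarith
      have hu1 : (1 : ℝ) - δ ^ 2 ≤ 1 := by nlinarith
      rw [cosFormula]
      simp only [Int.cast_zero] at hden ⊢
      constructor
      · rw [le_div_iff₀ hden]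
        nlinarith [sq_nonneg (1 - δ ^ 2)]
      · rw [div_le_one hden]
        have hsq : (1 - δ ^ 2) ^ 2 ≤ 1 := by nlinarith
        nlinarith [mul_le_mul_of_nonneg_left hsq (sq_nonneg (n : ℝ))]
end
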